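/- Let A be an n×n symmetric positive semidefinite matrix and P an n×n orthogonal projection matrix. Then trace((I + A)(I + P A P)⁻¹) ≤ n + trace(A − P A P). -/

import Mathlib

theorem stmt_4 {n : ℕ} (A P : Matrix (Fin n) (Fin n) ℝ)
    (hA : A.PosSemidef) (hPsym : P.transpose = P) (hPproj : P * P = P) :
    ((1 + A) * (1 + P * A * P)⁻¹).trace ≤ (n : ℝ) + (A - P * A * P).trace := by
  set C : Matrix (Fin n) (Fin n) ℝ := P * A * P with hCdef
  set B : Matrix (Fin n) (Fin n) ℝ := 1 + C with hBdef
  have hCps : C.PosSemidef := by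
    have h := hA.conjTranspose_mul_mul_same P
    rw [Matrix.conjTranspose_eq_transpose_of_trivial, hPsym] at h
    simpa [Matrix.conjTranspose, hPsym] using h
  have hBpd : B.PosDef := Matrix.PosDef.add_posSemidef Matrix.PosDef.one hCps
  have hdet : IsUnit B.det := isUnit_iff_ne_zero.mpr hBpd.det_pos.ne'
  have hBB : B * B⁻¹ = 1 := Matrix.mul_nonsing_inv B hdet
  have hBB' : B⁻¹ * B = 1 := Matrix.nonsing_inv_mul B hdet
  have hPC : P * C = C := by
    rw [hCdef, ← mul_assoc, ← mul_assoc, hPproj]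
  have hCP : C * P = C := by
    rw [hCdef, mul_assoc, hPproj]
  have hPB : P * B = B * P := by
    rw [hBdef, mul_add, add_mul, mul_one, one_mul, hPC, hCP]
  have hPBi : P * B⁻¹ = B⁻¹ * P := by
    have h : B⁻¹ * (P * B) * B⁻¹ = B⁻¹ * (B * P) * B⁻¹ := by rw [hPB]
    calc P * B⁻¹ = 1 * (P * B⁻¹) := (one_mul _).symm
      _ = B⁻¹ * (B * P) * B⁻¹ := by rw [← hBB']; noncomm_ring
      _ = B⁻¹ * (P * B) * B⁻¹ := h.symm
      _ = B⁻¹ * P * (B * B⁻¹) := by noncomm_ring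
      _ = B⁻¹ * P := by rw [hBB, mul_one]
  -- D := C * B⁻¹ satisfies P * D * P = D
  have hD : P * (C * B⁻¹) * P = C * B⁻¹ := by
    rw [← mul_assoc, hPC, mul_assoc, ← hPBi, ← mul_assoc, hCP]
  -- trace(A * (C * B⁻¹)) = trace(C * (C * B⁻¹))
  have ht1 : (A * (C * B⁻¹)).trace = (C * (C * B⁻¹)).trace := by
    conv_lhs => rw [← hD]
    rw [show A * (P * (C * B⁻¹) * P) = A * P * (C * B⁻¹) * P by noncomm_ring,
      Matrix.trace_mul_cycle,
      show P * (A * P) * (C * B⁻¹) = P * A * P * (C * B⁻¹) by noncomm_ring, ← hCdef]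
  -- B⁻¹ = 1 - C * B⁻¹
  have hBinv : B⁻¹ = 1 - C * B⁻¹ := by
    have h1 : (1 + C) * B⁻¹ = 1 := hBB
    rw [add_mul, one_mul] at h1
    linear_combination (norm := noncomm_ring) h1
  have hBC : B * C = C * B := by
    rw [hBdef]; noncomm_ring
  have hBCB : (1 + C) * (C * B⁻¹) = C := by
    rw [← hBdef, ← mul_assoc, hBC, mul_assoc, hBB, mul_one]
  have e2 : (C * (C * B⁻¹)).trace + (C * B⁻¹).trace = C.trace := by
    rw [← Matrix.trace_add,
      show C * (C * B⁻¹) + C * B⁻¹ = (1 + C) * (C * B⁻¹) by noncomm_ring, hBCB]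
  have key : ((1 + A) * B⁻¹).trace = (n : ℝ) + (A - C).trace := by
    have e1 : (1 + A) * B⁻¹ = (1 + A) - (1 + A) * (C * B⁻¹) := by
      conv_lhs => rw [hBinv]
      noncomm_ring
    rw [e1, Matrix.trace_sub, Matrix.trace_add, Matrix.trace_one, add_mul, one_mul,
      Matrix.trace_add, ht1, Matrix.trace_sub]
    simp only [Fintype.card_fin]
    linarith [e2]
  rw [key]
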